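/- Let V be a finite-dimensional real vector space and ω a nondegenerate alternating bilinear form on V. Then the set of linear complex structures J on V compatible with ω (i.e., J² = -id, ω(Jv, Jw) = ω(v,w) for all v,w, and ω(v, Jv) > 0 for all v ≠ 0) is nonempty and contractible. -/

import Mathlib

/-!
STATEMENT 13: Let `V` be a finite-dimensional real vector space and `ω` a nondegenerate
alternating bilinear form on `V`.  Then the set of linear complex structures `J` on `V`
compatible with `ω` (i.e. `J² = -id`, `ω(Jv, Jw) = ω(v, w)` for all `v, w`, and
`ω(v, Jv) > 0` for all `v ≠ 0`) is nonempty and contractible.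

The set of compatible complex structures is topologized as a subspace of the space of
(automatically continuous) linear endomorphisms of `V`; to speak of this topology we equip the
finite-dimensional space `V` with a norm (all of which induce the same topology).
-/

open Set

/-- The set of linear complex structures on `V` compatible with a given bilinear form `ω`. -/
def compatibleComplexStructures (V : Type*) [NormedAddCommGroup V] [NormedSpace ℝ V]
    (ω : V →ₗ[ℝ] V →ₗ[ℝ] ℝ) : Set (V →L[ℝ] V) :=
  {J | (∀ v, J (J v) = -v) ∧ (∀ v w, ω (J v) (J w) = ω v w) ∧ (∀ v, v ≠ 0 → 0 < ω v (J v))}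


set_option maxHeartbeats 1000000

universe u
open Module in
theorem exists_lin_J : ∀ (n : ℕ) (V : Type u) [AddCommGroup V] [Module ℝ V]
    [FiniteDimensional ℝ V], finrank ℝ V = n →
    ∀ (ω : V →ₗ[ℝ] V →ₗ[ℝ] ℝ), (∀ v, ω v v = 0) → (∀ v, v ≠ 0 → ∃ w, ω v w ≠ 0) →
    ∃ J : V →ₗ[ℝ] V, (∀ v, J (J v) = -v) ∧ (∀ v w, ω (J v) (J w) = ω v w) ∧
      (∀ v, v ≠ 0 → 0 < ω v (J v)) := by
  intro n
  induction n using Nat.strong_induction_on with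
  | _ n IH =>
    intro V _ _ _ hn ω h_alt h_nondeg
    have hskew : ∀ a b : V, ω a b = -ω b a := by
      intro a b
      have h := h_alt (a + b)
      simp only [map_add, LinearMap.add_apply, h_alt] at h
      linarith
    by_cases hV : ∀ v : V, v = 0
    · refine ⟨0, ?_, ?_, ?_⟩
      · intro v; rw [hV v]; simp
      · intro v w; rw [hV v, hV w]; simp
      · intro v hv; exact absurd (hV v) hv
    · push_neg at hV
      obtain ⟨v, hv⟩ := hV
      obtain ⟨w₀, hw₀⟩ := h_nondeg v hv
      obtain ⟨w, hvw⟩ : ∃ w : V, ω v w = 1 :=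
        ⟨(ω v w₀)⁻¹ • w₀, by simp [map_smul]; field_simp⟩
      have hwv : ω w v = -1 := by rw [hskew, hvw]
      -- the symplectic complement of span {v, w}
      set U : Submodule ℝ V := LinearMap.ker (ω v) ⊓ LinearMap.ker (ω w) with hU_def
      have hmemU : ∀ x : V, x ∈ U ↔ ω v x = 0 ∧ ω w x = 0 := by
        intro x; simp [hU_def, Submodule.mem_inf, LinearMap.mem_ker]
      have hUv : ∀ s : U, ω v (s : V) = 0 := fun s => ((hmemU s).mp s.2).1
      have hUw : ∀ s : U, ω w (s : V) = 0 := fun s => ((hmemU s).mp s.2).2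
      clear_value U
      have hvU : ∀ s : U, ω (s : V) v = 0 := by intro s; rw [hskew, hUv]; ring
      have hwU : ∀ s : U, ω (s : V) w = 0 := by intro s; rw [hskew, hUw]; ring
      have hUne : U ≠ ⊤ := by
        intro h
        have : v ∈ U := h ▸ Submodule.mem_top
        have := ((hmemU v).mp this).2
        rw [hwv] at this; norm_num at this
      have hUlt : finrank ℝ U < n := by
        rw [← hn]
        exact Submodule.finrank_lt hUne
      set ω' : U →ₗ[ℝ] U →ₗ[ℝ] ℝ := ω.domRestrict₁₂ U U with hω'ted
      have hω'app : ∀ x y : U, ω' x y = ω (x : V) (y : V) := fun x y => rfl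
      clear_value ω'
      have h_alt' : ∀ x : U, ω' x x = 0 := fun x => by rw [hω'app]; exact h_alt _
      have h_nondeg' : ∀ x : U, x ≠ 0 → ∃ y : U, ω' x y ≠ 0 := by
        intro x hx
        have hx' : (x : V) ≠ 0 := fun h => hx (Subtype.ext h)
        obtain ⟨z, hz⟩ := h_nondeg (x : V) hx'
        refine ⟨⟨z + (ω w z) • v - (ω v z) • w, ?_⟩, ?_⟩
        · rw [hmemU]
          constructor
          · simp [map_add, map_sub, map_smul, h_alt, hvw, smul_eq_mul]
          · simp [map_add, map_sub, map_smul, h_alt, hwv, smul_eq_mul]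
        · rw [hω'app]
          simp only [map_add, map_sub, map_smul, smul_eq_mul, hvU x, hwU x]
          simpa using hz
      obtain ⟨J', hJ'sq, hJ'symp, hJ'pos⟩ :=
        IH (finrank ℝ U) hUlt U rfl ω' h_alt' h_nondeg'
      -- projection onto U
      have hrmem : ∀ x : V, x + (ω w x) • v - (ω v x) • w ∈ U := by
        intro x
        rw [hmemU]
        constructor
        · simp [map_add, map_sub, map_smul, h_alt, hvw, smul_eq_mul]
        · simp [map_add, map_sub, map_smul, h_alt, hwv, smul_eq_mul]
      set rl : V →ₗ[ℝ] U := LinearMap.codRestrict U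
        (LinearMap.id + (ω w).smulRight v - (ω v).smulRight w) (fun x => hrmem x) with hrl_def
      have hrcoe : ∀ x : V, ((rl x : V)) = x + (ω w x) • v - (ω v x) • w := fun x => rfl
      clear_value rl
      set J : V →ₗ[ℝ] V := (ω w).smulRight (-w) - (ω v).smulRight v
          + U.subtype ∘ₗ J' ∘ₗ rl with hJ_def
      have hJapp : ∀ x : V, J x = (ω w x) • (-w) - (ω v x) • v + ((J' (rl x) : U) : V) :=
        fun x => rfl
      clear_value J
      -- coefficients of J x
      have hUJ' : ∀ s : U, ω v ((J' s : U) : V) = 0 := fun s => hUv _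
      have hUJ'w : ∀ s : U, ω w ((J' s : U) : V) = 0 := fun s => hUw _
      have hwJ : ∀ x : V, ω w (J x) = ω v x := by
        intro x
        rw [hJapp]
        simp [map_add, map_sub, map_smul, smul_eq_mul, h_alt, hwv, hUw]
      have hvJ : ∀ x : V, ω v (J x) = -(ω w x) := by
        intro x
        rw [hJapp]
        simp [map_add, map_sub, map_smul, smul_eq_mul, h_alt, hvw, hUv]
      have hrJ : ∀ x : V, rl (J x) = J' (rl x) := by
        intro x
        apply Subtype.ext
        rw [hrcoe, hwJ, hvJ, hJapp]
        module
      have hdecomp : ∀ x : V, x = (-(ω w x)) • v + (ω v x) • w + ((rl x : U) : V) := by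
        intro x
        rw [hrcoe]
        module
      have hform : ∀ x y : V, ω x y
          = (-(ω w x)) * (ω v y) - (-(ω w y)) * (ω v x) + ω ((rl x : U) : V) ((rl y : U) : V) := by
        intro x y
        conv_lhs => rw [hdecomp x, hdecomp y]
        simp only [map_add, map_smul, LinearMap.add_apply, LinearMap.smul_apply, smul_eq_mul,
          h_alt, hvw, hwv, hUv, hUw, hvU, hwU]
        ring
      refine ⟨J, ?_, ?_, ?_⟩
      · intro x
        conv_rhs => rw [hdecomp x]
        rw [hJapp (J x), hwJ, hvJ, hrJ, hJ'sq]
        simp only [Submodule.coe_neg]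
        module
      · intro x y
        rw [hform (J x) (J y), hform x y, hwJ, hvJ, hwJ, hvJ, hrJ, hrJ]
        have := hJ'symp (rl x) (rl y)
        rw [hω'app, hω'app] at this
        rw [this]
        ring
      · intro x hx
        rw [hform x (J x), hwJ, hvJ, hrJ]
        have hQ : 0 ≤ ω ((rl x : U) : V) ((J' (rl x) : U) : V) := by
          by_cases hr : rl x = 0
          · simp [hr]
          · have := hJ'pos (rl x) hr
            rw [hω'app] at this
            linarith
        by_cases hr : rl x = 0
        · have hab : ¬(ω w x = 0 ∧ ω v x = 0) := by
            rintro ⟨h1, h2⟩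
            apply hx
            rw [hdecomp x, h1, h2, hr]
            simp
          rcases not_and_or.mp hab with h | h
          · nlinarith [sq_nonneg (ω w x), sq_nonneg (ω v x), sq_pos_of_ne_zero h]
          · nlinarith [sq_nonneg (ω w x), sq_nonneg (ω v x), sq_pos_of_ne_zero h]
        · have := hJ'pos (rl x) hr
          rw [hω'app] at this
          nlinarith [sq_nonneg (ω w x), sq_nonneg (ω v x)]

section Contract

variable {V : Type*} [NormedAddCommGroup V] [NormedSpace ℝ V] [FiniteDimensional ℝ V]
  (ω : V →ₗ[ℝ] V →ₗ[ℝ] ℝ)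


/-- Upgrade an injective continuous endomorphism of a finite-dimensional space to a unit. -/
theorem exists_unit_of_injective (T : V →L[ℝ] V) (hT : Function.Injective ⇑T) :
    ∃ u : (V →L[ℝ] V)ˣ, (u : V →L[ℝ] V) = T := by
  have hT' : Function.Injective ⇑(T : V →ₗ[ℝ] V) := hT
  have hs : Function.Surjective ⇑(T : V →ₗ[ℝ] V) := LinearMap.injective_iff_surjective.mp hT'
  let e0 : V ≃ₗ[ℝ] V := LinearEquiv.ofBijective (T : V →ₗ[ℝ] V) ⟨hT', hs⟩
  let e : V ≃L[ℝ] V := e0.toContinuousLinearEquiv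
  have he : ∀ z, e z = T z := fun z => rfl
  refine ⟨⟨T, (e.symm : V →L[ℝ] V), ?_, ?_⟩, rfl⟩
  · ext z
    simp only [ContinuousLinearMap.mul_apply, ContinuousLinearMap.one_apply,
      ContinuousLinearEquiv.coe_coe]
    rw [← he, e.apply_symm_apply]
  · ext z
    simp only [ContinuousLinearMap.mul_apply, ContinuousLinearMap.one_apply,
      ContinuousLinearEquiv.coe_coe]
    rw [← he, e.symm_apply_apply]

theorem unit_inv_apply (u : (V →L[ℝ] V)ˣ) (x : V) :
    ((u⁻¹ : (V →L[ℝ] V)ˣ) : V →L[ℝ] V) ((u : V →L[ℝ] V) x) = x := by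
  rw [← ContinuousLinearMap.mul_apply, u.inv_mul, ContinuousLinearMap.one_apply]

theorem unit_apply_inv (u : (V →L[ℝ] V)ˣ) (x : V) :
    (u : V →L[ℝ] V) (((u⁻¹ : (V →L[ℝ] V)ˣ) : V →L[ℝ] V) x) = x := by
  rw [← ContinuousLinearMap.mul_apply, u.mul_inv, ContinuousLinearMap.one_apply]

theorem contractible_of_compatible_mem (h_alt : ∀ v, ω v v = 0) (J₀ : V →L[ℝ] V)
    (hJ₀ : J₀ ∈ compatibleComplexStructures V ω) :
    ContractibleSpace (compatibleComplexStructures V ω) := by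
  obtain ⟨hJ₀sq, hJ₀symp, hJ₀pos⟩ := hJ₀
  have hskew : ∀ a b : V, ω a b = -ω b a := by
    intro a b
    have h := h_alt (a + b)
    simp only [map_add, LinearMap.add_apply, h_alt] at h
    linarith
  have hg : ∀ a b : V, ω a (J₀ b) = ω b (J₀ a) := by
    intro a b
    have h1 : ω (J₀ b) a = ω (J₀ b) (-(J₀ (J₀ a))) := by rw [hJ₀sq a]; simp
    rw [hskew, h1, map_neg, hJ₀symp]
    ring
  -- the convex set of `J₀`-antilinear, `ω`-skew, contracting operators
  set S : Set (V →L[ℝ] V) :=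
    {W | (∀ v, W (J₀ v) = -(J₀ (W v))) ∧ (∀ a b, ω (W a) b = -(ω a (W b))) ∧
      (∀ v, v ≠ 0 → ω (W v) (J₀ (W v)) < ω v (J₀ v))} with hS_def
  have hQnn : ∀ z : V, 0 ≤ ω z (J₀ z) := by
    intro z
    rcases eq_or_ne z 0 with rfl | hz
    · simp
    · exact (hJ₀pos z hz).le
  have hconv : Convex ℝ S := by
    intro W₁ h₁ W₂ h₂ a b ha hb hab
    obtain ⟨h₁a, h₁s, h₁c⟩ := h₁
    obtain ⟨h₂a, h₂s, h₂c⟩ := h₂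
    refine ⟨?_, ?_, ?_⟩
    · intro v
      simp only [ContinuousLinearMap.add_apply, ContinuousLinearMap.coe_smul',
        Pi.smul_apply, h₁a, h₂a, map_add, map_smul]
      module
    · intro x y
      simp only [ContinuousLinearMap.add_apply, ContinuousLinearMap.coe_smul',
        Pi.smul_apply, map_add, map_smul, LinearMap.add_apply, LinearMap.smul_apply,
        smul_eq_mul, h₁s, h₂s]
      ring
    · intro v hv
      have hQ1 := h₁c v hv
      have hQ2 := h₂c v hv
      set x := W₁ v with hx_def
      set y := W₂ v with hy_def
      have hxy := hg x y
      have hsub' : 0 ≤ ω x (J₀ x) + ω y (J₀ y) - 2 * ω x (J₀ y) := by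
        have hsub := hQnn (x - y)
        simp only [map_sub, LinearMap.sub_apply] at hsub
        linarith
      have happ : (a • W₁ + b • W₂) v = a • x + b • y := by
        simp [ContinuousLinearMap.add_apply, hx_def, hy_def]
      rw [happ]
      have hexp : ω (a • x + b • y) (J₀ (a • x + b • y))
          = a^2 * ω x (J₀ x) + 2*a*b * ω x (J₀ y) + b^2 * ω y (J₀ y) := by
        simp only [map_add, map_smul, LinearMap.add_apply, LinearMap.smul_apply, smul_eq_mul]
        rw [hxy]
        ring
      have hkey : ω (a • x + b • y) (J₀ (a • x + b • y))
          ≤ a * ω x (J₀ x) + b * ω y (J₀ y) := by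
        rw [hexp]
        have hid : a * ω x (J₀ x) + b * ω y (J₀ y)
            - (a^2 * ω x (J₀ x) + 2*a*b * ω x (J₀ y) + b^2 * ω y (J₀ y))
            = a*b*(ω x (J₀ x) + ω y (J₀ y) - 2 * ω x (J₀ y)) := by
          linear_combination (-(a * ω x (J₀ x) + b * ω y (J₀ y))) * hab
        have hpr := mul_nonneg (mul_nonneg ha hb) hsub'
        linarith
      rcases lt_or_eq_of_le ha with ha' | ha'
      · have h1 : a * ω x (J₀ x) < a * ω v (J₀ v) := by
          exact mul_lt_mul_of_pos_left hQ1 ha'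
        have h2 : b * ω y (J₀ y) ≤ b * ω v (J₀ v) :=
          mul_le_mul_of_nonneg_left hQ2.le hb
        have h3 : a * ω v (J₀ v) + b * ω v (J₀ v) = ω v (J₀ v) := by
          linear_combination (ω v (J₀ v)) * hab
        linarith
      · have hb1 : b = 1 := by linarith
        have ha0 : a = 0 := ha'.symm
        rw [ha0, hb1] at hkey ⊢
        simpa using lt_of_le_of_lt (by simpa using hkey) hQ2
  have h0S : (0 : V →L[ℝ] V) ∈ S := by
    refine ⟨by simp, by simp, ?_⟩
    intro v hv
    simpa using hJ₀pos v hv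
  have hScontr : ContractibleSpace S := hconv.contractibleSpace ⟨0, h0S⟩
  -- injectivity of 1 - W for W ∈ S
  have hinj : ∀ W ∈ S, Function.Injective ⇑(1 - W) := by
    intro W hW x y hxy
    by_contra hne
    have hz : x - y ≠ 0 := sub_ne_zero.mpr hne
    have h0 : (1 - W) (x - y) = 0 := by
      rw [map_sub, hxy, sub_self]
    have hWz : W (x - y) = x - y := by
      have h0' := h0
      simp only [ContinuousLinearMap.sub_apply, ContinuousLinearMap.one_apply] at h0'
      exact (sub_eq_zero.mp h0').symm
    have := hW.2.2 (x - y) hz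
    rw [hWz] at this
    exact lt_irrefl _ this
  -- the two Cayley transforms
  set Ψf : (V →L[ℝ] V) → (V →L[ℝ] V) :=
    fun W => J₀ * (1 + W) * Ring.inverse (1 - W) with hΨf_def
  set Φf : (V →L[ℝ] V) → (V →L[ℝ] V) :=
    fun J => (-(J₀*J) - 1) * Ring.inverse (-(J₀*J) + 1) with hΦf_def
  -- Ψ maps S into the compatible structures
  have hΨmem : ∀ W ∈ S, Ψf W ∈ compatibleComplexStructures V ω := by
    intro W hW
    obtain ⟨hWa, hWs, hWc⟩ := hW
    obtain ⟨u, hu⟩ := exists_unit_of_injective (1 - W) (hinj W ⟨hWa, hWs, hWc⟩)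
    have hinv : ∀ x, Ring.inverse (1 - W) ((1 - W) x) = x := by
      intro x
      rw [← hu, Ring.inverse_unit]
      exact unit_inv_apply u x
    have hsurj : ∀ z : V, ∃ x, (1 - W) x = z := fun z =>
      ⟨((u⁻¹ : (V →L[ℝ] V)ˣ) : V →L[ℝ] V) z, by rw [← hu]; exact unit_apply_inv u z⟩
    have hΨ : ∀ z, Ψf W z = J₀ ((1 + W) (Ring.inverse (1 - W) z)) := by
      intro z; simp [hΨf_def, ContinuousLinearMap.mul_apply]
    have hJ0W : ∀ x, J₀ (W x) = -(W (J₀ x)) := by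
      intro x; rw [hWa x]; simp
    have key : ∀ x, Ψf W ((1 - W) x) = (1 - W) (J₀ x) := by
      intro x
      rw [hΨ, hinv]
      simp only [ContinuousLinearMap.add_apply, ContinuousLinearMap.sub_apply,
        ContinuousLinearMap.one_apply, map_add]
      rw [hJ0W]
      abel
    have hf : ∀ x y, ω ((1 - W) x) ((1 - W) y) = ω x y - ω x (W (W y)) := by
      intro x y
      simp only [ContinuousLinearMap.sub_apply, ContinuousLinearMap.one_apply,
        map_sub, LinearMap.sub_apply]
      rw [hWs x y, hWs x (W y)]
      ring
    have hWWJ : ∀ z, W (W (J₀ z)) = J₀ (W (W z)) := by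
      intro z
      rw [hWa z, map_neg, hWa (W z)]
      simp
    refine ⟨?_, ?_, ?_⟩
    · intro v
      obtain ⟨x, rfl⟩ := hsurj v
      rw [key, key, hJ₀sq, map_neg]
    · intro p q
      obtain ⟨x, rfl⟩ := hsurj p
      obtain ⟨y, rfl⟩ := hsurj q
      rw [key, key, hf, hf, hWWJ, hJ₀symp, hJ₀symp]
    · intro v hv
      obtain ⟨x, rfl⟩ := hsurj v
      have hx : x ≠ 0 := by rintro rfl; simp at hv
      rw [key, hf]
      have e1 : ω x (W (W (J₀ x))) = -(ω (W x) (W (J₀ x))) := by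
        have := hWs x (W (J₀ x)); linarith
      have e2 : ω (W x) (W (J₀ x)) = -(ω (W x) (J₀ (W x))) := by
        rw [hWa x]; simp
      have := hWc x hx
      rw [e1, e2]
      linarith
  -- injectivity of `1 + K` for `J` compatible
  have hDinj : ∀ J ∈ compatibleComplexStructures V ω,
      Function.Injective ⇑(-(J₀ * J) + 1) := by
    intro J hJ
    obtain ⟨hJsq, hJsymp, hJpos⟩ := hJ
    intro x y hxy
    by_contra hne
    have hz : x - y ≠ 0 := sub_ne_zero.mpr hne
    have h0 : (-(J₀ * J) + 1) (x - y) = 0 := by rw [map_sub, hxy, sub_self]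
    have hKJ0 : ω ((-(J₀ * J)) (x - y)) (J₀ (x - y)) = ω (x - y) (J (x - y)) := by
      simp only [ContinuousLinearMap.neg_apply, ContinuousLinearMap.mul_apply,
        map_neg, LinearMap.neg_apply]
      rw [hJ₀symp, hskew]
      ring
    have hpos : 0 < ω ((-(J₀ * J) + 1) (x - y)) (J₀ (x - y)) := by
      simp only [ContinuousLinearMap.add_apply, ContinuousLinearMap.one_apply,
        map_add, LinearMap.add_apply]
      have h2 := hJpos (x - y) hz
      have h3 := hJ₀pos (x - y) hz
      rw [hKJ0]
      linarith
    rw [h0] at hpos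
    simp at hpos
  -- Φ maps compatible structures into S and is a section of Ψ
  have hΦ : ∀ J ∈ compatibleComplexStructures V ω, Φf J ∈ S ∧ Ψf (Φf J) = J := by
    intro J hJ
    have hKinj : Function.Injective ⇑(-(J₀ * J) + 1) := hDinj J hJ
    obtain ⟨hJsq, hJsymp, hJpos⟩ := hJ
    set K : V →L[ℝ] V := -(J₀ * J) with hK_def
    have hK : ∀ z, K z = -(J₀ (J z)) := by
      intro z; simp [hK_def, ContinuousLinearMap.mul_apply]
    have hJ0K : ∀ x, J₀ (K x) = J x := by
      intro x; rw [hK x, map_neg, hJ₀sq, neg_neg]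
    have hKJ0 : ∀ x, ω (K x) (J₀ x) = ω x (J x) := by
      intro x
      rw [hK x, map_neg, LinearMap.neg_apply, hJ₀symp, hskew]
      ring
    have hKinj' : Function.Injective ⇑(K + 1) := hKinj
    obtain ⟨u, hu⟩ := exists_unit_of_injective (K + 1) hKinj'
    have hinv : ∀ x, Ring.inverse (K + 1) ((K + 1) x) = x := by
      intro x
      rw [← hu, Ring.inverse_unit]
      exact unit_inv_apply u x
    have hsurj : ∀ z : V, ∃ x, (K + 1) x = z := fun z =>
      ⟨((u⁻¹ : (V →L[ℝ] V)ˣ) : V →L[ℝ] V) z, by rw [← hu]; exact unit_apply_inv u z⟩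
    have hΦJ : Φf J = (K - 1) * Ring.inverse (K + 1) := by
      simp only [hΦf_def, hK_def]
    have hΦapp : ∀ x, Φf J ((K + 1) x) = (K - 1) x := by
      intro x
      rw [hΦJ, ContinuousLinearMap.mul_apply, hinv]
    have hJD : ∀ x, J₀ ((K + 1) x) = (K + 1) (J x) := by
      intro x
      simp only [ContinuousLinearMap.add_apply, ContinuousLinearMap.one_apply, map_add]
      rw [hJ0K x, hK (J x), hJsq x, map_neg, neg_neg]
      abel
    have cond1 : ∀ v, Φf J (J₀ v) = -(J₀ (Φf J v)) := by
      intro v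
      obtain ⟨x, rfl⟩ := hsurj v
      rw [hJD, hΦapp, hΦapp]
      simp only [ContinuousLinearMap.sub_apply, ContinuousLinearMap.one_apply, map_sub]
      rw [hK (J x), hJsq x, map_neg, neg_neg, hJ0K x]
      abel
    have hKsymp : ∀ x y, ω (K x) (K y) = ω x y := by
      intro x y
      rw [hK x, hK y]
      simp only [map_neg, LinearMap.neg_apply, neg_neg]
      rw [hJ₀symp, hJsymp]
    have cond2 : ∀ p q, ω (Φf J p) q = -(ω p (Φf J q)) := by
      intro p q
      obtain ⟨x, rfl⟩ := hsurj p
      obtain ⟨y, rfl⟩ := hsurj q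
      rw [hΦapp, hΦapp]
      simp only [ContinuousLinearMap.sub_apply, ContinuousLinearMap.add_apply,
        ContinuousLinearMap.one_apply, map_sub, map_add, LinearMap.sub_apply,
        LinearMap.add_apply]
      have := hKsymp x y
      linarith
    have cond3 : ∀ v, v ≠ 0 → ω (Φf J v) (J₀ (Φf J v)) < ω v (J₀ v) := by
      intro v hv
      obtain ⟨x, rfl⟩ := hsurj v
      have hx : x ≠ 0 := by rintro rfl; simp at hv
      rw [hΦapp]
      simp only [ContinuousLinearMap.sub_apply, ContinuousLinearMap.add_apply,
        ContinuousLinearMap.one_apply, map_sub, map_add, LinearMap.sub_apply,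
        LinearMap.add_apply]
      have h1 := hKJ0 x
      have h2 : ω x (J₀ (K x)) = ω x (J x) := by rw [hJ0K x]
      have h3 := hJpos x hx
      linarith
    have hmemS : Φf J ∈ S := ⟨cond1, cond2, cond3⟩
    refine ⟨hmemS, ?_⟩
    obtain ⟨u2, hu2⟩ := exists_unit_of_injective (1 - Φf J) (hinj _ hmemS)
    ext v
    have e1 : (1 - Φf J) ((2⁻¹ : ℝ) • ((K + 1) v)) = v := by
      simp only [ContinuousLinearMap.sub_apply, ContinuousLinearMap.one_apply, map_smul]
      rw [hΦapp]
      simp only [ContinuousLinearMap.add_apply, ContinuousLinearMap.sub_apply,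
        ContinuousLinearMap.one_apply]
      module
    have e2 : Ring.inverse (1 - Φf J) v = (2⁻¹ : ℝ) • ((K + 1) v) := by
      rw [← hu2, Ring.inverse_unit]
      conv_lhs => rw [← e1, ← hu2]
      exact unit_inv_apply u2 _
    have e0 : Ψf (Φf J) v = J₀ ((1 + Φf J) (Ring.inverse (1 - Φf J) v)) := by
      simp [hΨf_def, ContinuousLinearMap.mul_apply]
    rw [e0, e2]
    have e4 : (1 + Φf J) ((2⁻¹ : ℝ) • ((K + 1) v)) = K v := by
      rw [ContinuousLinearMap.add_apply, ContinuousLinearMap.one_apply, map_smul, hΦapp]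
      simp only [ContinuousLinearMap.add_apply, ContinuousLinearMap.sub_apply,
        ContinuousLinearMap.one_apply]
      module
    rw [e4, hJ0K]
  -- continuity of the two transforms
  haveI : CompleteSpace V := FiniteDimensional.complete ℝ V
  have hΨcont : ContinuousOn Ψf S := by
    intro W hW
    apply ContinuousAt.continuousWithinAt
    have c1 : Continuous fun T : V →L[ℝ] V => J₀ * (1 + T) :=
      continuous_const.mul (continuous_const.add continuous_id)
    have c2 : Continuous fun T : V →L[ℝ] V => 1 - T := continuous_const.sub continuous_id
    obtain ⟨u, hu⟩ := exists_unit_of_injective (1 - W) (hinj W hW)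
    have c3 : ContinuousAt (fun T : V →L[ℝ] V => Ring.inverse (1 - T)) W := by
      have h := NormedRing.inverse_continuousAt u
      rw [hu] at h
      exact h.comp c2.continuousAt
    have c4 : ContinuousAt (fun T : V →L[ℝ] V => J₀ * (1 + T) * Ring.inverse (1 - T)) W :=
      c1.continuousAt.mul c3
    simpa only [hΨf_def] using c4
  have hΦcont : ContinuousOn Φf (compatibleComplexStructures V ω) := by
    intro J hJ
    apply ContinuousAt.continuousWithinAt
    have c1 : Continuous fun T : V →L[ℝ] V => -(J₀ * T) - 1 :=
      ((continuous_const.mul continuous_id).neg).sub continuous_const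
    have c2 : Continuous fun T : V →L[ℝ] V => -(J₀ * T) + 1 :=
      ((continuous_const.mul continuous_id).neg).add continuous_const
    obtain ⟨u, hu⟩ := exists_unit_of_injective (-(J₀ * J) + 1) (hDinj J hJ)
    have c3 : ContinuousAt (fun T : V →L[ℝ] V => Ring.inverse (-(J₀ * T) + 1)) J := by
      have h := NormedRing.inverse_continuousAt u
      rw [hu] at h
      exact ContinuousAt.comp (g := Ring.inverse)
        (f := fun T : V →L[ℝ] V => -(J₀ * T) + 1) h c2.continuousAt
    have c4 : ContinuousAt
        (fun T : V →L[ℝ] V => (-(J₀ * T) - 1) * Ring.inverse (-(J₀ * T) + 1)) J :=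
      c1.continuousAt.mul c3
    simpa only [hΦf_def] using c4
  -- assemble the homotopy retraction
  let Φc : C(compatibleComplexStructures V ω, S) :=
    ⟨fun J => ⟨Φf (J : V →L[ℝ] V), (hΦ J J.2).1⟩, by
      apply Continuous.subtype_mk
      exact hΦcont.comp_continuous continuous_subtype_val fun J => J.2⟩
  let Ψc : C(S, compatibleComplexStructures V ω) :=
    ⟨fun W => ⟨Ψf (W : V →L[ℝ] V), hΨmem W W.2⟩, by
      apply Continuous.subtype_mk
      exact hΨcont.comp_continuous continuous_subtype_val fun W => W.2⟩
  have hcomp : Ψc.comp Φc = ContinuousMap.id _ := by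
    apply ContinuousMap.ext
    intro J
    apply Subtype.ext
    exact (hΦ (J : V →L[ℝ] V) J.2).2
  have hidS : (ContinuousMap.id S).Nullhomotopic :=
    (contractible_iff_id_nullhomotopic S).mp hScontr
  have h1 := hidS.comp_left Φc
  rw [ContinuousMap.id_comp] at h1
  have h2 := h1.comp_right Ψc
  rw [hcomp] at h2
  exact (contractible_iff_id_nullhomotopic _).mpr h2


end Contract

/-- For a nondegenerate alternating bilinear form `ω` on a finite-dimensional real vector
space `V`, the space of `ω`-compatible linear complex structures on `V` is nonempty and
contractible. -/
theorem compatibleComplexStructures_nonempty_and_contractible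
    (V : Type*) [NormedAddCommGroup V] [NormedSpace ℝ V] [FiniteDimensional ℝ V]
    (ω : V →ₗ[ℝ] V →ₗ[ℝ] ℝ)
    (h_alt : ∀ v, ω v v = 0)
    (h_nondeg : ∀ v, v ≠ 0 → ∃ w, ω v w ≠ 0) :
    (compatibleComplexStructures V ω).Nonempty ∧
      ContractibleSpace (compatibleComplexStructures V ω) := by
  obtain ⟨J, hJ1, hJ2, hJ3⟩ := exists_lin_J (Module.finrank ℝ V) V rfl ω h_alt h_nondeg
  let J₀ : V →L[ℝ] V := LinearMap.toContinuousLinearMap J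
  have hco : ⇑J₀ = ⇑J := LinearMap.coe_toContinuousLinearMap' J
  have hmem : J₀ ∈ compatibleComplexStructures V ω := by
    refine ⟨?_, ?_, ?_⟩ <;> simp only [hco]
    · exact hJ1
    · exact hJ2
    · exact hJ3
  exact ⟨⟨J₀, hmem⟩, contractible_of_compatible_mem ω h_alt J₀ hmem⟩
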